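/- There exists a hyperbolic triangle all of whose interior angles equal 2π/7; more generally, for any α, β, γ > 0 with α + β + γ < π there exists a hyperbolic triangle with angles α, β, γ. -/

import Mathlib

set_option maxHeartbeats 1000000

noncomputable def distH (u v : EuclideanSpace ℝ (Fin 2)) : ℝ :=
  2 * Real.arsinh (‖u - v‖ / Real.sqrt ((1 - ‖u‖ ^ 2) * (1 - ‖v‖ ^ 2)))

/-- The points `a b c` in the Poincaré disk form a hyperbolic triangle whose interior
angles (characterized by the hyperbolic law of cosines in terms of the hyperbolic
side lengths) are `α` at `a`, `β` at `b` and `γ` at `c`. -/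
noncomputable def TriangleWithAngles (a b c : EuclideanSpace ℝ (Fin 2))
    (α β γ : ℝ) : Prop :=
  ‖a‖ < 1 ∧ ‖b‖ < 1 ∧ ‖c‖ < 1 ∧ a ≠ b ∧ b ≠ c ∧ a ≠ c ∧
  Real.cos α = (Real.cosh (distH a b) * Real.cosh (distH a c) - Real.cosh (distH b c)) /
      (Real.sinh (distH a b) * Real.sinh (distH a c)) ∧
  Real.cos β = (Real.cosh (distH b a) * Real.cosh (distH b c) - Real.cosh (distH a c)) /
      (Real.sinh (distH b a) * Real.sinh (distH b c)) ∧
  Real.cos γ = (Real.cosh (distH c a) * Real.cosh (distH c b) - Real.cosh (distH a b)) /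
      (Real.sinh (distH c a) * Real.sinh (distH c b))

open Real

noncomputable def hpt (x y : ℝ) : EuclideanSpace ℝ (Fin 2) :=
  (WithLp.equiv 2 (Fin 2 → ℝ)).symm ![x, y]

lemma hpt_zero (x y : ℝ) : hpt x y 0 = x := by simp [hpt]
lemma hpt_one (x y : ℝ) : hpt x y 1 = y := by simp [hpt]

lemma my_normsq (u : EuclideanSpace ℝ (Fin 2)) : ‖u‖ ^ 2 = u 0 ^ 2 + u 1 ^ 2 := by
  rw [EuclideanSpace.norm_eq, Real.sq_sqrt (by positivity)]
  simp [Fin.sum_univ_two]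

lemma distH_comm (u v : EuclideanSpace ℝ (Fin 2)) : distH u v = distH v u := by
  rw [distH, distH, norm_sub_rev, mul_comm (1 - ‖u‖ ^ 2)]

lemma cosh_distH (u v : EuclideanSpace ℝ (Fin 2)) (hu : ‖u‖ < 1) (hv : ‖v‖ < 1) :
    Real.cosh (distH u v) = 1 + 2 * ‖u - v‖ ^ 2 / ((1 - ‖u‖ ^ 2) * (1 - ‖v‖ ^ 2)) := by
  have hP : 0 < (1 - ‖u‖ ^ 2) * (1 - ‖v‖ ^ 2) := by
    have h1 := norm_nonneg u; have h2 := norm_nonneg v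
    have h3 : 0 < 1 - ‖u‖ ^ 2 := by nlinarith
    have h4 : 0 < 1 - ‖v‖ ^ 2 := by nlinarith
    exact mul_pos h3 h4
  rw [distH, Real.cosh_two_mul, Real.cosh_arsinh, Real.sinh_arsinh,
    Real.sq_sqrt (by positivity), div_pow, Real.sq_sqrt hP.le]
  ring

lemma distH_pos (u v : EuclideanSpace ℝ (Fin 2)) (hu : ‖u‖ < 1) (hv : ‖v‖ < 1)
    (huv : u ≠ v) : 0 < distH u v := by
  have hP : 0 < (1 - ‖u‖ ^ 2) * (1 - ‖v‖ ^ 2) := by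
    have h1 := norm_nonneg u; have h2 := norm_nonneg v
    have h3 : 0 < 1 - ‖u‖ ^ 2 := by nlinarith
    have h4 : 0 < 1 - ‖v‖ ^ 2 := by nlinarith
    exact mul_pos h3 h4
  have hw : 0 < ‖u - v‖ / Real.sqrt ((1 - ‖u‖ ^ 2) * (1 - ‖v‖ ^ 2)) := by
    apply div_pos (norm_pos_iff.mpr (sub_ne_zero.mpr huv)) (Real.sqrt_pos.mpr hP)
  have : 0 < Real.arsinh (‖u - v‖ / Real.sqrt ((1 - ‖u‖ ^ 2) * (1 - ‖v‖ ^ 2))) := by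
    rw [← Real.arsinh_zero]; exact Real.arsinh_lt_arsinh.mpr hw
  rw [distH]; linarith

lemma sinh_distH (u v : EuclideanSpace ℝ (Fin 2)) (hu : ‖u‖ < 1) (hv : ‖v‖ < 1)
    (huv : u ≠ v) :
    Real.sinh (distH u v) = Real.sqrt (Real.cosh (distH u v) ^ 2 - 1) := by
  have hpos : 0 < Real.sinh (distH u v) := by
    rw [← Real.sinh_zero]; exact Real.sinh_lt_sinh.mpr (distH_pos u v hu hv huv)
  have h : Real.sinh (distH u v) ^ 2 = Real.cosh (distH u v) ^ 2 - 1 := by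
    rw [Real.cosh_sq]; ring
  rw [← h, Real.sqrt_sq hpos.le]

lemma sqrt_sq_sub_one (cA sA cB sB cC z : ℝ) (hA : 0 < sA) (hB : 0 < sB)
    (pA : cA ^ 2 + sA ^ 2 = 1) (pB : cB ^ 2 + sB ^ 2 = 1)
    (hD : 0 < cA ^ 2 + cB ^ 2 + cC ^ 2 + 2 * cA * cB * cC - 1)
    (hz : z * (sA * sB) = cA * cB + cC) :
    Real.sqrt (z ^ 2 - 1) =
      Real.sqrt (cA ^ 2 + cB ^ 2 + cC ^ 2 + 2 * cA * cB * cC - 1) / (sA * sB) := by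
  have h2 : z ^ 2 - 1 =
      (cA ^ 2 + cB ^ 2 + cC ^ 2 + 2 * cA * cB * cC - 1) / (sA * sB) ^ 2 := by
    have hz2 : (z * (sA * sB)) ^ 2 = (cA * cB + cC) ^ 2 := by rw [hz]
    field_simp
    linear_combination hz2 - (sB ^ 2) * pA - (1 - cA ^ 2) * pB
  rw [h2, Real.sqrt_div hD.le, Real.sqrt_sq (by positivity)]

lemma cos_eq (cA sA cB sB cC sC x y z : ℝ) (hA : 0 < sA) (hB : 0 < sB) (hC : 0 < sC)
    (pA : cA ^ 2 + sA ^ 2 = 1) (pB : cB ^ 2 + sB ^ 2 = 1) (pC : cC ^ 2 + sC ^ 2 = 1)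
    (hD : 0 < cA ^ 2 + cB ^ 2 + cC ^ 2 + 2 * cA * cB * cC - 1)
    (hx : x * (sB * sC) = cB * cC + cA) (hy : y * (sA * sC) = cA * cC + cB)
    (hz : z * (sA * sB) = cA * cB + cC) :
    cA = (z * y - x) / (Real.sqrt (z ^ 2 - 1) * Real.sqrt (y ^ 2 - 1)) := by
  set D := cA ^ 2 + cB ^ 2 + cC ^ 2 + 2 * cA * cB * cC - 1 with hDdef
  have hDy : 0 < cA ^ 2 + cC ^ 2 + cB ^ 2 + 2 * cA * cC * cB - 1 := by linarith [hD]
  have h1 : Real.sqrt (z ^ 2 - 1) = Real.sqrt D / (sA * sB) :=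
    sqrt_sq_sub_one cA sA cB sB cC z hA hB pA pB hD hz
  have h2 : Real.sqrt (y ^ 2 - 1) = Real.sqrt D / (sA * sC) := by
    have := sqrt_sq_sub_one cA sA cC sC cB y hA hC pA pC hDy hy
    rw [this]; rw [show cA ^ 2 + cC ^ 2 + cB ^ 2 + 2 * cA * cC * cB - 1 = D from by
      rw [hDdef]; ring]
  have hprod : Real.sqrt (z ^ 2 - 1) * Real.sqrt (y ^ 2 - 1) =
      D / (sA ^ 2 * sB * sC) := by
    rw [h1, h2, div_mul_div_comm, Real.mul_self_sqrt hD.le]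
    congr 1; ring
  have hnum : z * y - x = cA * D / (sA ^ 2 * sB * sC) := by
    have e1 : (z * y - x) * (sA ^ 2 * sB * sC) = cA * D := by
      have := hx; have := hy; have := hz
      calc (z * y - x) * (sA ^ 2 * sB * sC)
          = (z * (sA * sB)) * (y * (sA * sC)) - (x * (sB * sC)) * sA ^ 2 := by ring
        _ = (cA * cB + cC) * (cA * cC + cB) - (cB * cC + cA) * sA ^ 2 := by
            rw [hx, hy, hz]
        _ = cA * D := by rw [hDdef]; linear_combination (-(cB * cC + cA)) * pA
    have hne : (sA ^ 2 * sB * sC) ≠ 0 := by positivity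
    field_simp
    linear_combination e1
  rw [hprod, hnum]
  have hQ : (sA ^ 2 * sB * sC) ≠ 0 := by positivity
  field_simp

lemma sqrt_prod (cA sA cB sB cC sC y z : ℝ) (hA : 0 < sA) (hB : 0 < sB) (hC : 0 < sC)
    (pA : cA ^ 2 + sA ^ 2 = 1) (pB : cB ^ 2 + sB ^ 2 = 1) (pC : cC ^ 2 + sC ^ 2 = 1)
    (hD : 0 < cA ^ 2 + cB ^ 2 + cC ^ 2 + 2 * cA * cB * cC - 1)
    (hy : y * (sA * sC) = cA * cC + cB) (hz : z * (sA * sB) = cA * cB + cC) :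
    Real.sqrt (z ^ 2 - 1) * Real.sqrt (y ^ 2 - 1) =
      (cA ^ 2 + cB ^ 2 + cC ^ 2 + 2 * cA * cB * cC - 1) / (sA ^ 2 * sB * sC) := by
  have hDy : 0 < cA ^ 2 + cC ^ 2 + cB ^ 2 + 2 * cA * cC * cB - 1 := by linarith [hD]
  have h1 : Real.sqrt (z ^ 2 - 1) =
      Real.sqrt (cA ^ 2 + cB ^ 2 + cC ^ 2 + 2 * cA * cB * cC - 1) / (sA * sB) :=
    sqrt_sq_sub_one cA sA cB sB cC z hA hB pA pB hD hz
  have h2 : Real.sqrt (y ^ 2 - 1) =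
      Real.sqrt (cA ^ 2 + cB ^ 2 + cC ^ 2 + 2 * cA * cB * cC - 1) / (sA * sC) := by
    have h := sqrt_sq_sub_one cA sA cC sC cB y hA hC pA pC hDy hy
    rw [h]
    rw [show cA ^ 2 + cC ^ 2 + cB ^ 2 + 2 * cA * cC * cB - 1
        = cA ^ 2 + cB ^ 2 + cC ^ 2 + 2 * cA * cB * cC - 1 from by ring]
  rw [h1, h2, div_mul_div_comm, Real.mul_self_sqrt hD.le]
  congr 1; ring

lemma num_eq (cA sA cB sB cC sC x y z : ℝ) (hA : 0 < sA) (hB : 0 < sB) (hC : 0 < sC)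
    (pA : cA ^ 2 + sA ^ 2 = 1)
    (hx : x * (sB * sC) = cB * cC + cA) (hy : y * (sA * sC) = cA * cC + cB)
    (hz : z * (sA * sB) = cA * cB + cC) :
    z * y - x = cA * (cA ^ 2 + cB ^ 2 + cC ^ 2 + 2 * cA * cB * cC - 1) /
      (sA ^ 2 * sB * sC) := by
  have e1 : (z * y - x) * (sA ^ 2 * sB * sC)
      = cA * (cA ^ 2 + cB ^ 2 + cC ^ 2 + 2 * cA * cB * cC - 1) := by
    calc (z * y - x) * (sA ^ 2 * sB * sC)
        = (z * (sA * sB)) * (y * (sA * sC)) - (x * (sB * sC)) * sA ^ 2 := by ring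
      _ = (cA * cB + cC) * (cA * cC + cB) - (cB * cC + cA) * sA ^ 2 := by rw [hx, hy, hz]
      _ = cA * (cA ^ 2 + cB ^ 2 + cC ^ 2 + 2 * cA * cB * cC - 1) := by
          linear_combination (-(cB * cC + cA)) * pA
  have hne : (sA ^ 2 * sB * sC) ≠ 0 := by positivity
  field_simp
  linear_combination e1

lemma cos_eq' (cA sA cB sB cC sC x y z : ℝ) (hA : 0 < sA) (hB : 0 < sB) (hC : 0 < sC)
    (pA : cA ^ 2 + sA ^ 2 = 1) (pB : cB ^ 2 + sB ^ 2 = 1) (pC : cC ^ 2 + sC ^ 2 = 1)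
    (hD : 0 < cA ^ 2 + cB ^ 2 + cC ^ 2 + 2 * cA * cB * cC - 1)
    (hx : x * (sB * sC) = cB * cC + cA) (hy : y * (sA * sC) = cA * cC + cB)
    (hz : z * (sA * sB) = cA * cB + cC) :
    cA = (z * y - x) / (Real.sqrt (z ^ 2 - 1) * Real.sqrt (y ^ 2 - 1)) := by
  rw [sqrt_prod cA sA cB sB cC sC y z hA hB hC pA pB pC hD hy hz,
    num_eq cA sA cB sB cC sC x y z hA hB hC pA hx hy hz]
  have hQ : (sA ^ 2 * sB * sC) ≠ 0 := by positivity
  field_simp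
  have hD0 : cA ^ 2 + cB ^ 2 + cC ^ 2 + cA * cB * cC * 2 - 1 ≠ 0 := by
    have : 0 < cA ^ 2 + cB ^ 2 + cC ^ 2 + cA * cB * cC * 2 - 1 := by linarith
    exact this.ne'
  rw [mul_div_assoc, div_self hD0, mul_one]

lemma construct (cA sA cB sB cC sC : ℝ) (hA : 0 < sA) (hB : 0 < sB) (hC : 0 < sC)
    (pA : cA ^ 2 + sA ^ 2 = 1) (pB : cB ^ 2 + sB ^ 2 = 1) (pC : cC ^ 2 + sC ^ 2 = 1)
    (hxgt : sB * sC - cB * cC < cA)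
    (hygt : sA * sC - cA * cC < cB)
    (hzgt : sA * sB - cA * cB < cC) :
    ∃ a b c : EuclideanSpace ℝ (Fin 2),
      ‖a‖ < 1 ∧ ‖b‖ < 1 ∧ ‖c‖ < 1 ∧ a ≠ b ∧ b ≠ c ∧ a ≠ c ∧
      cA = (Real.cosh (distH a b) * Real.cosh (distH a c) - Real.cosh (distH b c)) /
          (Real.sinh (distH a b) * Real.sinh (distH a c)) ∧
      cB = (Real.cosh (distH b a) * Real.cosh (distH b c) - Real.cosh (distH a c)) /
          (Real.sinh (distH b a) * Real.sinh (distH b c)) ∧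
      cC = (Real.cosh (distH c a) * Real.cosh (distH c b) - Real.cosh (distH a b)) /
          (Real.sinh (distH c a) * Real.sinh (distH c b)) := by
  -- side "cosh lengths"
  set x := (cB * cC + cA) / (sB * sC) with hxd
  set y := (cA * cC + cB) / (sA * sC) with hyd
  set z := (cA * cB + cC) / (sA * sB) with hzd
  have hx' : x * (sB * sC) = cB * cC + cA := by rw [hxd]; field_simp
  have hy' : y * (sA * sC) = cA * cC + cB := by rw [hyd]; field_simp
  have hz' : z * (sA * sB) = cA * cB + cC := by rw [hzd]; field_simp
  have hx1 : 1 < x := by rw [hxd, lt_div_iff₀ (by positivity)]; linarith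
  have hy1 : 1 < y := by rw [hyd, lt_div_iff₀ (by positivity)]; linarith
  have hz1 : 1 < z := by rw [hzd, lt_div_iff₀ (by positivity)]; linarith
  have hD : 0 < cA ^ 2 + cB ^ 2 + cC ^ 2 + 2 * cA * cB * cC - 1 := by
    have hfac : cA ^ 2 + cB ^ 2 + cC ^ 2 + 2 * cA * cB * cC - 1
        = (cC + (cA * cB + sA * sB)) * (cC + (cA * cB - sA * sB)) := by
      linear_combination (sB ^ 2) * pA + (1 - cA ^ 2) * pB
    rw [hfac]
    have h2 : 0 < cC + (cA * cB - sA * sB) := by linarith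
    have h1 : 0 < cC + (cA * cB + sA * sB) := by linarith [mul_pos hA hB]
    exact mul_pos h1 h2
  have hzp : (0:ℝ) < z + 1 := by linarith
  have hyp : (0:ℝ) < y + 1 := by linarith
  -- Euclidean radii
  set t := Real.sqrt ((z - 1) / (z + 1)) with htd
  set s := Real.sqrt ((y - 1) / (y + 1)) with hsd
  have ht2 : t ^ 2 = (z - 1) / (z + 1) :=
    Real.sq_sqrt (div_nonneg (by linarith) hzp.le)
  have hs2 : s ^ 2 = (y - 1) / (y + 1) :=
    Real.sq_sqrt (div_nonneg (by linarith) hyp.le)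
  have htpos : 0 < t := Real.sqrt_pos.mpr (div_pos (by linarith) hzp)
  have hspos : 0 < s := Real.sqrt_pos.mpr (div_pos (by linarith) hyp)
  have hqz : (z - 1) / (z + 1) < 1 := by rw [div_lt_one hzp]; linarith
  have hqy : (y - 1) / (y + 1) < 1 := by rw [div_lt_one hyp]; linarith
  have ht1 : t < 1 := by
    rw [htd]
    have h := Real.sqrt_lt_sqrt (div_nonneg (by linarith : (0:ℝ) ≤ z - 1) hzp.le) hqz
    rwa [Real.sqrt_one] at h
  have hs1 : s < 1 := by
    rw [hsd]
    have h := Real.sqrt_lt_sqrt (div_nonneg (by linarith : (0:ℝ) ≤ y - 1) hyp.le) hqy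
    rwa [Real.sqrt_one] at h
  -- the points
  refine ⟨0, hpt t 0, hpt (s * cA) (s * sA), ?_⟩
  have ha : ‖(0 : EuclideanSpace ℝ (Fin 2))‖ = 0 := norm_zero
  have ha1 : ‖(0 : EuclideanSpace ℝ (Fin 2))‖ < 1 := by rw [ha]; norm_num
  have hb2 : ‖hpt t 0‖ ^ 2 = t ^ 2 := by rw [my_normsq, hpt_zero, hpt_one]; ring
  have hc2 : ‖hpt (s * cA) (s * sA)‖ ^ 2 = s ^ 2 := by
    rw [my_normsq, hpt_zero, hpt_one]; linear_combination s ^ 2 * pA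
  have hbn : ‖hpt t 0‖ = t := by
    rw [← Real.sqrt_sq (norm_nonneg _), hb2, Real.sqrt_sq htpos.le]
  have hcn : ‖hpt (s * cA) (s * sA)‖ = s := by
    rw [← Real.sqrt_sq (norm_nonneg _), hc2, Real.sqrt_sq hspos.le]
  have hb1 : ‖hpt t 0‖ < 1 := by rw [hbn]; exact ht1
  have hc1 : ‖hpt (s * cA) (s * sA)‖ < 1 := by rw [hcn]; exact hs1
  have hne_ab : (0 : EuclideanSpace ℝ (Fin 2)) ≠ hpt t 0 := by
    intro h
    have h0 := congrArg (fun u : EuclideanSpace ℝ (Fin 2) => u 0) h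
    simp only [hpt_zero] at h0
    simp at h0
    linarith
  have hne_bc : hpt t 0 ≠ hpt (s * cA) (s * sA) := by
    intro h
    have h0 := congrArg (fun u : EuclideanSpace ℝ (Fin 2) => u 1) h
    simp only [hpt_one] at h0
    exact (mul_pos hspos hA).ne' h0.symm
  have hne_ac : (0 : EuclideanSpace ℝ (Fin 2)) ≠ hpt (s * cA) (s * sA) := by
    intro h
    have h0 := congrArg (fun u : EuclideanSpace ℝ (Fin 2) => u 1) h
    simp only [hpt_one] at h0
    simp only [PiLp.zero_apply] at h0
    exact (mul_pos hspos hA).ne' h0.symm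
  -- squared euclidean distances
  have hab2 : ‖(0 : EuclideanSpace ℝ (Fin 2)) - hpt t 0‖ ^ 2 = t ^ 2 := by
    rw [zero_sub, norm_neg]; exact hb2
  have hac2 : ‖(0 : EuclideanSpace ℝ (Fin 2)) - hpt (s * cA) (s * sA)‖ ^ 2 = s ^ 2 := by
    rw [zero_sub, norm_neg]; exact hc2
  have hbc2 : ‖hpt t 0 - hpt (s * cA) (s * sA)‖ ^ 2 = t ^ 2 + s ^ 2 - 2 * (t * s) * cA := by
    rw [my_normsq]
    have e0 : (hpt t 0 - hpt (s * cA) (s * sA)) 0 = t - s * cA := by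
      simp [hpt_zero]
    have e1 : (hpt t 0 - hpt (s * cA) (s * sA)) 1 = 0 - s * sA := by
      simp [hpt_one]
    rw [e0, e1]
    linear_combination s ^ 2 * pA
  -- cosh of the sides
  have hcoshab : Real.cosh (distH 0 (hpt t 0)) = z := by
    rw [cosh_distH _ _ ha1 hb1, hab2, hb2, ha, ht2]
    have e : 1 - (z - 1) / (z + 1) = 2 / (z + 1) := by field_simp; ring
    rw [e]
    field_simp
    ring
  have hcoshac : Real.cosh (distH 0 (hpt (s * cA) (s * sA))) = y := by
    rw [cosh_distH _ _ ha1 hc1, hac2, hc2, ha, hs2]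
    have e : 1 - (y - 1) / (y + 1) = 2 / (y + 1) := by field_simp; ring
    rw [e]
    field_simp
    ring
  have hz2ge : (0:ℝ) ≤ z ^ 2 - 1 := by
    rw [sub_nonneg, pow_two]
    calc (1:ℝ) = 1 * 1 := by norm_num
      _ ≤ z * z := mul_le_mul hz1.le hz1.le zero_le_one (zero_le_one.trans hz1.le)
  have hts : t * s = Real.sqrt (z ^ 2 - 1) * Real.sqrt (y ^ 2 - 1) / ((z + 1) * (y + 1)) := by
    have h1 : Real.sqrt (z ^ 2 - 1) * Real.sqrt (y ^ 2 - 1)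
        = Real.sqrt ((z ^ 2 - 1) * (y ^ 2 - 1)) := (Real.sqrt_mul hz2ge _).symm
    have h2 : t * s = Real.sqrt ((z - 1) / (z + 1) * ((y - 1) / (y + 1))) :=
      (Real.sqrt_mul (div_nonneg (by linarith) hzp.le) _).symm
    rw [h1, h2, eq_div_iff (mul_pos hzp hyp).ne',
      show ((z + 1) * (y + 1)) = Real.sqrt (((z + 1) * (y + 1)) ^ 2) from
        (Real.sqrt_sq (mul_pos hzp hyp).le).symm,
      ← Real.sqrt_mul (mul_nonneg (div_nonneg (by linarith : (0:ℝ) ≤ z - 1) hzp.le)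
        (div_nonneg (by linarith : (0:ℝ) ≤ y - 1) hyp.le)) (((z + 1) * (y + 1)) ^ 2)]
    congr 1
    field_simp
    ring
  have hSx : z * y - x = Real.sqrt (z ^ 2 - 1) * Real.sqrt (y ^ 2 - 1) * cA := by
    rw [sqrt_prod cA sA cB sB cC sC y z hA hB hC pA pB pC hD hy' hz',
      num_eq cA sA cB sB cC sC x y z hA hB hC pA hx' hy' hz']
    ring
  have hcoshbc : Real.cosh (distH (hpt t 0) (hpt (s * cA) (s * sA))) = x := by
    rw [cosh_distH _ _ hb1 hc1, hbc2, hb2, hc2, ht2, hs2, hts]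
    have ez : 1 - (z - 1) / (z + 1) = 2 / (z + 1) := by field_simp; ring
    have ey : 1 - (y - 1) / (y + 1) = 2 / (y + 1) := by field_simp; ring
    rw [ez, ey, show x = z * y - Real.sqrt (z ^ 2 - 1) * Real.sqrt (y ^ 2 - 1) * cA from
      by linarith [hSx]]
    field_simp
    ring
  -- sinh of the sides
  have hsab : Real.sinh (distH 0 (hpt t 0)) = Real.sqrt (z ^ 2 - 1) := by
    rw [sinh_distH _ _ ha1 hb1 hne_ab, hcoshab]
  have hsac : Real.sinh (distH 0 (hpt (s * cA) (s * sA))) = Real.sqrt (y ^ 2 - 1) := by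
    rw [sinh_distH _ _ ha1 hc1 hne_ac, hcoshac]
  have hsbc : Real.sinh (distH (hpt t 0) (hpt (s * cA) (s * sA))) = Real.sqrt (x ^ 2 - 1) := by
    rw [sinh_distH _ _ hb1 hc1 hne_bc, hcoshbc]
  refine ⟨ha1, hb1, hc1, hne_ab, hne_bc, hne_ac, ?_, ?_, ?_⟩
  · rw [hcoshab, hcoshac, hcoshbc, hsab, hsac]
    exact cos_eq' cA sA cB sB cC sC x y z hA hB hC pA pB pC hD hx' hy' hz'
  · rw [distH_comm (hpt t 0) 0, hcoshab, hcoshac, hcoshbc, hsab, hsbc]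
    have hD' : 0 < cB ^ 2 + cA ^ 2 + cC ^ 2 + 2 * cB * cA * cC - 1 := by linarith [hD]
    exact cos_eq' cB sB cA sA cC sC y x z hB hA hC pB pA pC hD'
      (by linear_combination hy') (by linear_combination hx') (by linear_combination hz')
  · rw [distH_comm (hpt (s * cA) (s * sA)) 0, distH_comm (hpt (s * cA) (s * sA)) (hpt t 0),
      hcoshab, hcoshac, hcoshbc, hsac, hsbc]
    have hD' : 0 < cC ^ 2 + cA ^ 2 + cB ^ 2 + 2 * cC * cA * cB - 1 := by linarith [hD]
    exact cos_eq' cC sC cA sA cB sB z x y hC hA hB pC pA pB hD'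
      (by linear_combination hz') (by linear_combination hx') (by linear_combination hy')


lemma ang_lt (α β γ : ℝ) (hα : 0 < α) (hβ : 0 < β) (hγ : 0 < γ)
    (hsum : α + β + γ < Real.pi) :
    Real.sin β * Real.sin γ - Real.cos β * Real.cos γ < Real.cos α := by
  have h1 : Real.sin β * Real.sin γ - Real.cos β * Real.cos γ
      = Real.cos (Real.pi - (β + γ)) := by
    rw [Real.cos_pi_sub, Real.cos_add]; ring
  rw [h1]
  exact Real.cos_lt_cos_of_nonneg_of_le_pi hα.le (by linarith) (by linarith)

/-- For all `α, β, γ > 0` with `α + β + γ < π` there is a hyperbolic triangle with these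
angles; in particular there is one with all angles equal to `2π/7`. -/
theorem stmt18 :
    (∀ α β γ : ℝ, 0 < α → 0 < β → 0 < γ → α + β + γ < Real.pi →
      ∃ a b c : EuclideanSpace ℝ (Fin 2), TriangleWithAngles a b c α β γ) ∧
    (∃ a b c : EuclideanSpace ℝ (Fin 2),
      TriangleWithAngles a b c (2 * Real.pi / 7) (2 * Real.pi / 7) (2 * Real.pi / 7)) := by
  have main : ∀ α β γ : ℝ, 0 < α → 0 < β → 0 < γ → α + β + γ < Real.pi →
      ∃ a b c : EuclideanSpace ℝ (Fin 2), TriangleWithAngles a b c α β γ := by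
    intro α β γ hα hβ hγ hsum
    have hαπ : α < Real.pi := by linarith
    have hβπ : β < Real.pi := by linarith
    have hγπ : γ < Real.pi := by linarith
    simp only [TriangleWithAngles]
    exact construct (Real.cos α) (Real.sin α) (Real.cos β) (Real.sin β)
      (Real.cos γ) (Real.sin γ)
      (Real.sin_pos_of_pos_of_lt_pi hα hαπ)
      (Real.sin_pos_of_pos_of_lt_pi hβ hβπ)
      (Real.sin_pos_of_pos_of_lt_pi hγ hγπ)
      (Real.cos_sq_add_sin_sq α) (Real.cos_sq_add_sin_sq β) (Real.cos_sq_add_sin_sq γ)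
      (ang_lt α β γ hα hβ hγ hsum)
      (ang_lt β α γ hβ hα hγ (by linarith))
      (ang_lt γ α β hγ hα hβ (by linarith))
  have hpi := Real.pi_pos
  exact ⟨main, main _ _ _ (by linarith) (by linarith) (by linarith) (by linarith)⟩
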